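/- With the linear schedule α_t = 1−t, β_t = t, and x₁ ~ N(0,M) with M > 1, the averaged squared Lipschitzness A₂ = ∫₀¹ ((t−1 + tM)/((1−t)² + t²M))² dt is bounded below by c√M for a universal constant c > 0 and all M sufficiently large. -/

import Mathlib

open Real

/-- With the linear schedule `α t = 1 − t`, `β t = t`, and `x₁ ~ N(0,M)` with `M > 1`, the
averaged squared Lipschitzness `A₂ = ∫₀¹ ((t−1+tM)/((1−t)²+t²M))² dt` is bounded below by
`c √M` for a universal constant `c > 0` and all `M` sufficiently large. -/
theorem stmt7 :
    ∃ c > (0 : ℝ), ∃ M₀ : ℝ, 1 < M₀ ∧ ∀ M : ℝ, M₀ ≤ M →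
      c * Real.sqrt M ≤
        ∫ t in (0 : ℝ)..1, ((t - 1 + t * M) / ((1 - t) ^ 2 + t ^ 2 * M)) ^ 2 := by
  refine ⟨1/100, by norm_num, 16, by norm_num, fun M hM => ?_⟩
  have hM0 : (0:ℝ) < M := by linarith
  have hs : (4:ℝ) ≤ Real.sqrt M := by
    have h := Real.sqrt_le_sqrt hM
    rwa [show (16:ℝ) = 4^2 by norm_num, Real.sqrt_sq (by norm_num : (0:ℝ) ≤ 4)] at h
  have hs0 : (0:ℝ) < Real.sqrt M := by linarith
  have hsq : Real.sqrt M * Real.sqrt M = M := Real.mul_self_sqrt hM0.le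
  set f : ℝ → ℝ := fun t => ((t - 1 + t * M) / ((1 - t) ^ 2 + t ^ 2 * M)) ^ 2 with hf
  set a : ℝ := 1 / Real.sqrt M with ha
  set b : ℝ := 2 / Real.sqrt M with hb
  have ha0 : (0:ℝ) ≤ a := by positivity
  have hab : a ≤ b := by
    rw [ha, hb]; gcongr <;> norm_num
  have hb1 : b ≤ 1 := by rw [hb, div_le_one hs0]; linarith
  have hD : ∀ t : ℝ, 0 < (1 - t) ^ 2 + t ^ 2 * M := by
    intro t
    nlinarith [sq_nonneg (2*t - 1), sq_nonneg t]
  have hcont : Continuous f := by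
    apply Continuous.pow
    exact Continuous.div (by continuity) (by continuity) (fun t => (hD t).ne')
  have hint : ∀ u v : ℝ, IntervalIntegrable f MeasureTheory.volume u v :=
    fun u v => hcont.intervalIntegrable u v
  have key : ∀ t ∈ Set.Icc a b, M / 100 ≤ f t := by
    intro t ht
    obtain ⟨h1, h2⟩ := ht
    have ht0 : 0 < t := lt_of_lt_of_le (by positivity) h1
    have h1' : 1 ≤ t * Real.sqrt M := (div_le_iff₀ hs0).mp h1
    have h2' : t * Real.sqrt M ≤ 2 := (le_div_iff₀ hs0).mp h2
    have htM : Real.sqrt M ≤ t * M := by nlinarith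
    have ht2 : t ^ 2 * M ≤ 4 := by nlinarith
    have ht1 : t ≤ 1 := le_trans h2 hb1
    have hDle : (1 - t) ^ 2 + t ^ 2 * M ≤ 5 := by nlinarith
    have hN : Real.sqrt M / 2 ≤ t - 1 + t * M := by linarith
    have hfrac : Real.sqrt M / 10 ≤ (t - 1 + t * M) / ((1 - t) ^ 2 + t ^ 2 * M) := by
      calc Real.sqrt M / 10 = (Real.sqrt M / 2) / 5 := by ring
        _ ≤ (t - 1 + t * M) / ((1 - t) ^ 2 + t ^ 2 * M) :=
            div_le_div₀ (by linarith) hN (hD t) hDle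
    have := pow_le_pow_left₀ (by positivity : (0:ℝ) ≤ Real.sqrt M / 10) hfrac 2
    calc M / 100 = (Real.sqrt M / 10) ^ 2 := by rw [div_pow, sq, hsq]; norm_num
      _ ≤ f t := this
  have step2 : (b - a) * (M / 100) ≤ ∫ t in a..b, f t := by
    have h := intervalIntegral.integral_mono_on hab
      (intervalIntegrable_const) (hint a b) key
    rwa [intervalIntegral.integral_const, smul_eq_mul] at h
  have step1 : (∫ t in a..b, f t) ≤ ∫ t in (0:ℝ)..1, f t := by
    apply intervalIntegral.integral_mono_interval ha0 hab hb1 ?_ (hint 0 1)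
    filter_upwards with t using sq_nonneg _
  have hba : b - a = 1 / Real.sqrt M := by rw [ha, hb]; ring
  have hval : (b - a) * (M / 100) = (1/100) * Real.sqrt M := by
    rw [hba]; field_simp
    rw [sq, hsq]
  linarith [step1, step2, hval ▸ step2]
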